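/- Let ξ be a nonzero centered real random variable with finite second moment. Then P(ξ > 0) ≥ 1/2 − (1/2)·√(1 − (E|ξ|)²/E(ξ²)). -/

import Mathlib

open MeasureTheory ProbabilityTheory Real

-- Cauchy–Schwarz for a nonnegative function supported on s
lemma csaux {Ω : Type*} [MeasureSpace Ω] [IsProbabilityMeasure (ℙ : Measure Ω)]
    (f : Ω → ℝ) (hf : Measurable f) (hf2 : Integrable (fun ω => f ω ^ 2))
    (hfnn : ∀ ω, 0 ≤ f ω) (s : Set Ω) (hs : MeasurableSet s)
    (hfs : ∀ ω, ω ∉ s → f ω = 0) :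
    ∫ ω, f ω ≤ Real.sqrt (∫ ω, f ω ^ 2) * Real.sqrt ((ℙ s).toReal) := by
  have hpq : Real.HolderConjugate 2 2 := Real.HolderConjugate.two_two
  have h2 : (ENNReal.ofReal (2:ℝ)) = 2 := by norm_num
  have hmf : MemLp f 2 ℙ :=
    (memLp_two_iff_integrable_sq hf.aestronglyMeasurable).2 hf2
  have hmg : MemLp (s.indicator (fun _ => (1:ℝ))) 2 ℙ :=
    memLp_indicator_const 2 hs 1 (Or.inr (measure_ne_top _ _))
  have key := integral_mul_le_Lp_mul_Lq_of_nonneg (μ := ℙ) hpq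
    (Filter.Eventually.of_forall hfnn)
    (Filter.Eventually.of_forall fun ω => Set.indicator_nonneg (fun _ _ => zero_le_one) ω)
    (h2 ▸ hmf) (h2 ▸ hmg)
  have e1 : (fun ω => f ω * s.indicator (fun _ => (1:ℝ)) ω) = f := by
    funext ω
    by_cases h : ω ∈ s
    · simp [Set.indicator_of_mem h]
    · simp [Set.indicator_of_notMem h, hfs ω h]
  have e2 : ∀ ω, f ω ^ (2:ℝ) = f ω ^ 2 := fun ω => by
    rw [show (2:ℝ) = ((2:ℕ):ℝ) by norm_num, Real.rpow_natCast]
  have e3 : ∀ ω, s.indicator (fun _ => (1:ℝ)) ω ^ (2:ℝ) = s.indicator (fun _ => (1:ℝ)) ω := by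
    intro ω
    by_cases h : ω ∈ s
    · simp [Set.indicator_of_mem h]
    · simp [Set.indicator_of_notMem h, Real.zero_rpow]
  rw [e1] at key
  simp only [e2, e3] at key
  rw [integral_indicator_const (1:ℝ) hs] at key
  calc ∫ ω, f ω ≤ (∫ ω, f ω ^ 2) ^ (1/(2:ℝ)) * ((ℙ s).toReal • (1:ℝ)) ^ (1/(2:ℝ)) := key
    _ = Real.sqrt (∫ ω, f ω ^ 2) * Real.sqrt ((ℙ s).toReal) := by
        rw [smul_eq_mul, mul_one, ← Real.sqrt_eq_rpow, ← Real.sqrt_eq_rpow]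

theorem stmt3 {Ω : Type*} [MeasureSpace Ω] [IsProbabilityMeasure (ℙ : Measure Ω)]
    (ξ : Ω → ℝ) (hmeas : Measurable ξ)
    (hint : Integrable ξ) (hint2 : Integrable (fun ω => (ξ ω) ^ 2))
    (hmean : (∫ ω, ξ ω) = 0) (hnz : 0 < ∫ ω, (ξ ω) ^ 2) :
    ENNReal.ofReal (1 / 2 - Real.sqrt (1 - (∫ ω, |ξ ω|) ^ 2 / (∫ ω, (ξ ω) ^ 2)) / 2)
      ≤ ℙ {ω | 0 < ξ ω} := by
  set B := ∫ ω, (ξ ω) ^ 2 with hB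
  set A := ∫ ω, |ξ ω| with hA
  set s : Set Ω := {ω | 0 < ξ ω} with hsdef
  set s' : Set Ω := {ω | ξ ω < 0} with hs'def
  have hs : MeasurableSet s := measurableSet_lt measurable_const hmeas
  have hs' : MeasurableSet s' := measurableSet_lt hmeas measurable_const
  set p := (ℙ s).toReal with hp
  set q := (ℙ s').toReal with hq
  -- p + q ≤ 1
  have hdisj : Disjoint s s' := by
    rw [Set.disjoint_left]; intro ω h1 h2
    have h1' : 0 < ξ ω := h1
    have h2' : ξ ω < 0 := h2
    linarith
  have hpq1 : p + q ≤ 1 := by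
    have := measure_union (μ := (ℙ : Measure Ω)) hdisj hs'
    have hle : ℙ (s ∪ s') ≤ 1 := prob_le_one
    rw [this] at hle
    have := ENNReal.toReal_mono ENNReal.one_ne_top hle
    rwa [ENNReal.toReal_add (measure_ne_top _ _) (measure_ne_top _ _), ENNReal.toReal_one] at this
  have hp0 : 0 ≤ p := ENNReal.toReal_nonneg
  have hq0 : 0 ≤ q := ENNReal.toReal_nonneg
  -- positive and negative parts
  set fp : Ω → ℝ := fun ω => max (ξ ω) 0 with hfp
  set fm : Ω → ℝ := fun ω => max (-ξ ω) 0 with hfm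
  have hfpm : Measurable fp := hmeas.max measurable_const
  have hfmm : Measurable fm := hmeas.neg.max measurable_const
  have hfpint2 : Integrable (fun ω => fp ω ^ 2) := by
    refine hint2.mono (hfpm.pow_const 2).aestronglyMeasurable
      (Filter.Eventually.of_forall fun ω => ?_)
    simp only [hfp, Real.norm_eq_abs]
    rcases le_total (ξ ω) 0 with h | h
    · rw [max_eq_right h]; simp [abs_nonneg, sq_abs, sq_nonneg]
    · rw [max_eq_left h]
  have hfmint2 : Integrable (fun ω => fm ω ^ 2) := by
    refine hint2.mono (hfmm.pow_const 2).aestronglyMeasurable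
      (Filter.Eventually.of_forall fun ω => ?_)
    simp only [hfm, Real.norm_eq_abs]
    rcases le_total (ξ ω) 0 with h | h
    · rw [max_eq_left (by linarith)]; rw [abs_of_nonneg (sq_nonneg _), abs_of_nonneg (sq_nonneg _)]
      ring_nf; exact le_refl _
    · rw [max_eq_right (by linarith)]; simp [abs_nonneg, sq_nonneg]
  -- integrals of fp, fm equal A/2
  have hfpeq : (fun ω => fp ω) = fun ω => (ξ ω + |ξ ω|) / 2 := by
    funext ω; rcases le_total (ξ ω) 0 with h | h
    · rw [hfp]; simp only; rw [max_eq_right h, abs_of_nonpos h]; ring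
    · rw [hfp]; simp only; rw [max_eq_left h, abs_of_nonneg h]; ring
  have hfmeq : (fun ω => fm ω) = fun ω => (|ξ ω| - ξ ω) / 2 := by
    funext ω; rcases le_total (ξ ω) 0 with h | h
    · rw [hfm]; simp only; rw [max_eq_left (by linarith), abs_of_nonpos h]; ring
    · rw [hfm]; simp only; rw [max_eq_right (by linarith), abs_of_nonneg h]; ring
  have hintabs : Integrable (fun ω => |ξ ω|) := hint.abs
  have hfpI : ∫ ω, fp ω = A / 2 := by
    rw [hfpeq]
    rw [integral_div, integral_add hint hintabs, hmean, zero_add]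
  have hfmI : ∫ ω, fm ω = A / 2 := by
    rw [hfmeq]
    rw [integral_div, integral_sub hintabs hint, hmean, sub_zero]
  -- Cauchy–Schwarz
  have hcs1 : A / 2 ≤ Real.sqrt (∫ ω, fp ω ^ 2) * Real.sqrt p := by
    rw [← hfpI]
    exact csaux fp hfpm hfpint2 (fun ω => le_max_right _ _) s hs
      (fun ω h => max_eq_right (le_of_not_gt h))
  have hcs2 : A / 2 ≤ Real.sqrt (∫ ω, fm ω ^ 2) * Real.sqrt q := by
    rw [← hfmI]
    exact csaux fm hfmm hfmint2 (fun ω => le_max_right _ _) s' hs'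
      (fun ω h => max_eq_right (by
        have h' : ¬ ξ ω < 0 := h
        linarith [not_lt.1 h']))
  -- sum of second moments of parts
  set B1 := ∫ ω, fp ω ^ 2 with hB1
  set B2 := ∫ ω, fm ω ^ 2 with hB2
  have hBsum : B1 + B2 = B := by
    rw [hB1, hB2, ← integral_add hfpint2 hfmint2]
    congr 1; funext ω
    rcases le_total (ξ ω) 0 with h | h
    · rw [hfp, hfm]; simp only; rw [max_eq_right h, max_eq_left (by linarith)]; ring
    · rw [hfp, hfm]; simp only; rw [max_eq_left h, max_eq_right (by linarith)]; ring
  have hB1nn : 0 ≤ B1 := integral_nonneg fun ω => sq_nonneg _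
  have hB2nn : 0 ≤ B2 := integral_nonneg fun ω => sq_nonneg _
  have hAnn : 0 ≤ A := integral_nonneg fun ω => abs_nonneg _
  -- squared Cauchy-Schwarz
  have hsq1 : (A/2)^2 ≤ B1 * p := by
    have := mul_self_le_mul_self (by linarith) hcs1
    calc (A/2)^2 = (A/2) * (A/2) := sq _
      _ ≤ (Real.sqrt B1 * Real.sqrt p) * (Real.sqrt B1 * Real.sqrt p) := this
      _ = (Real.sqrt B1 * Real.sqrt B1) * (Real.sqrt p * Real.sqrt p) := by ring
      _ = B1 * p := by rw [Real.mul_self_sqrt hB1nn, Real.mul_self_sqrt hp0]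
  have hsq2 : (A/2)^2 ≤ B2 * q := by
    have := mul_self_le_mul_self (by linarith) hcs2
    calc (A/2)^2 = (A/2) * (A/2) := sq _
      _ ≤ (Real.sqrt B2 * Real.sqrt q) * (Real.sqrt B2 * Real.sqrt q) := this
      _ = (Real.sqrt B2 * Real.sqrt B2) * (Real.sqrt q * Real.sqrt q) := by ring
      _ = B2 * q := by rw [Real.mul_self_sqrt hB2nn, Real.mul_self_sqrt hq0]
  -- key: A^2 ≤ 4 B p (1-p)
  have hkey : A^2 ≤ 4 * (B * (p * (1 - p))) := by
    have h1p : 0 ≤ 1 - p := by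
      have : p ≤ 1 := by linarith
      linarith
    nlinarith [mul_le_mul_of_nonneg_right hsq1 h1p, mul_le_mul_of_nonneg_right hsq2 hp0,
      mul_le_mul_of_nonneg_right (mul_le_mul_of_nonneg_left (show q ≤ 1 - p by linarith) hB2nn) hp0]
  -- conclude
  have hdiv : A^2 / B ≤ 4*(p*(1-p)) := (div_le_iff₀ hnz).2 (by nlinarith)
  have hr : (1 - 2*p)^2 ≤ 1 - A^2 / B := by nlinarith
  have hsqrt : 1 - 2*p ≤ Real.sqrt (1 - A^2 / B) := by
    calc 1 - 2*p ≤ |1 - 2*p| := le_abs_self _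
      _ = Real.sqrt ((1 - 2*p)^2) := (Real.sqrt_sq_eq_abs _).symm
      _ ≤ Real.sqrt (1 - A^2 / B) := Real.sqrt_le_sqrt hr
  have hfinal : 1 / 2 - Real.sqrt (1 - A ^ 2 / B) / 2 ≤ p := by linarith
  calc ENNReal.ofReal (1 / 2 - Real.sqrt (1 - A ^ 2 / B) / 2)
      ≤ ENNReal.ofReal p := ENNReal.ofReal_le_ofReal hfinal
    _ = ℙ s := ENNReal.ofReal_toReal (measure_ne_top _ _)
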